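/- arXiv:1512.04219 — 2 statements merged into one kernel-verified Lean document; each statement's English description precedes it below -/
import Mathlib

section
/- Let a_A, a_B ∈ ℝ³ be unit vectors, α, β ∈ [0, π], r_A = α·a_A, r_B = β·a_B, and let φ ∈ [0, π] be defined by cos φ = ⟨a_A, a_B⟩. Then the composed rotation exp(S(r_B)) · exp(S(r_A)) has rotation angle 2·arccos(cos(α/2)·cos(β/2) − sin(α/2)·sin(β/2)·cos φ) whenever cos(α/2)·cos(β/2) − sin(α/2)·sin(β/2)·cos φ ≥ 0, i.e. arccos((trace(exp(S(r_B))·exp(S(r_A))) − 1)/2) = 2·arccos(cos(α/2)·cos(β/2) − sin(α/2)·sin(β/2)·cos φ) under this hypothesis. -/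
set_option maxHeartbeats 1000000

open Real Matrix

/-- The skew-symmetric matrix associated to a vector `r ∈ ℝ³`. -/
noncomputable def skew (r : EuclideanSpace ℝ (Fin 3)) : Matrix (Fin 3) (Fin 3) ℝ :=
  !![0, -(r 2), r 1;
     r 2, 0, -(r 0);
     -(r 1), r 0, 0]

lemma skew_smul (c : ℝ) (a : EuclideanSpace ℝ (Fin 3)) : skew (c • a) = c • skew a := by
  ext i j
  fin_cases i <;> fin_cases j <;>
    simp [skew, PiLp.smul_apply, smul_eq_mul]

lemma skew_cube (a : EuclideanSpace ℝ (Fin 3)) (h : a 0 ^ 2 + a 1 ^ 2 + a 2 ^ 2 = 1) :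
    skew a ^ 3 = -skew a := by
  have key : skew a ^ 3 = (a 0 ^ 2 + a 1 ^ 2 + a 2 ^ 2) • (-skew a) := by
    rw [pow_succ, pow_succ, pow_one]
    ext i j
    fin_cases i <;> fin_cases j <;>
      simp [skew, Matrix.mul_apply, Fin.sum_univ_three, Matrix.smul_apply, smul_eq_mul] <;> ring
  rw [key, h, one_smul]

lemma skew_pow_odd (a : EuclideanSpace ℝ (Fin 3)) (h : a 0 ^ 2 + a 1 ^ 2 + a 2 ^ 2 = 1)
    (k : ℕ) : skew a ^ (2 * k + 1) = ((-1 : ℝ) ^ k) • skew a := by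
  induction k with
  | zero => simp
  | succ n ih =>
    have h2 : 2 * (n + 1) + 1 = (2 * n + 1) + 2 := by ring
    have h3 : skew a * skew a ^ 2 = skew a ^ 3 := (pow_succ' (skew a) 2).symm
    rw [h2, pow_add, ih, smul_mul_assoc, h3, skew_cube a h, pow_succ]
    rw [smul_neg, ← neg_smul]
    congr 1
    ring

lemma skew_pow_even (a : EuclideanSpace ℝ (Fin 3)) (h : a 0 ^ 2 + a 1 ^ 2 + a 2 ^ 2 = 1)
    (k : ℕ) : skew a ^ (2 * k + 2) = ((-1 : ℝ) ^ k) • skew a ^ 2 := by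
  have h2 : 2 * k + 2 = (2 * k + 1) + 1 := by ring
  rw [h2, pow_succ, skew_pow_odd a h, smul_mul_assoc, ← pow_two]

lemma exp_skew (a : EuclideanSpace ℝ (Fin 3)) (h : a 0 ^ 2 + a 1 ^ 2 + a 2 ^ 2 = 1) (t : ℝ) :
    NormedSpace.exp (t • skew a)
      = 1 + Real.sin t • skew a + (1 - Real.cos t) • skew a ^ 2 := by
  rw [NormedSpace.exp_eq_tsum (𝕂 := ℝ)]
  refine HasSum.tsum_eq ?_
  have hodd : HasSum
      (fun k : ℕ => (((2 * k + 1).factorial : ℝ))⁻¹ • (t • skew a) ^ (2 * k + 1))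
      (Real.sin t • skew a) := by
    have := (Real.hasSum_sin t).smul_const (skew a)
    convert this using 2 with n
    rw [smul_pow, skew_pow_odd a h, smul_smul, smul_smul]
    congr 1
    ring
  have hcos := Real.hasSum_cos t
  have h1 : HasSum
      (fun n : ℕ => (-1 : ℝ) ^ (n + 1) * t ^ (2 * (n + 1)) / ((2 * (n + 1)).factorial : ℝ))
      (Real.cos t - 1) := by
    refine (hasSum_nat_add_iff
      (f := fun n : ℕ => (-1 : ℝ) ^ n * t ^ (2 * n) / ((2 * n).factorial : ℝ)) 1).mpr ?_
    simpa using hcos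
  have heven0 := (h1.neg).smul_const (skew a ^ 2)
  have h2 : HasSum
      (fun k : ℕ => (((2 * (k + 1)).factorial : ℝ))⁻¹ • (t • skew a) ^ (2 * (k + 1)))
      ((1 - Real.cos t) • skew a ^ 2) := by
    convert heven0 using 2 with n
    · have h2n : 2 * (n + 1) = 2 * n + 2 := by ring
      rw [h2n, smul_pow, skew_pow_even a h, smul_smul, smul_smul]
      congr 1
      have hneg : (-1 : ℝ) ^ (n + 1) = -(-1 : ℝ) ^ n := by ring
      rw [hneg]
      ring
    · congr 1
      ring
  have heven : HasSum
      (fun k : ℕ => (((2 * k).factorial : ℝ))⁻¹ • (t • skew a) ^ (2 * k))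
      (1 + (1 - Real.cos t) • skew a ^ 2) := by
    have h3 := (hasSum_nat_add_iff
      (f := fun k : ℕ => (((2 * k).factorial : ℝ))⁻¹ • (t • skew a) ^ (2 * k)) 1).mp h2
    convert h3 using 1
    · rfl
    simp
    abel
  have hfin := HasSum.even_add_odd
    (f := fun n : ℕ => ((n.factorial : ℝ))⁻¹ • (t • skew a) ^ n) heven hodd
  have hv : 1 + (1 - Real.cos t) • skew a ^ 2 + Real.sin t • skew a
      = 1 + Real.sin t • skew a + (1 - Real.cos t) • skew a ^ 2 := by abel
  rw [hv] at hfin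
  exact hfin

lemma rot_explicit (a : EuclideanSpace ℝ (Fin 3)) (s v : ℝ) :
    (1 : Matrix (Fin 3) (Fin 3) ℝ) + s • skew a + v • skew a ^ 2 =
    !![1 + v * (-(a 1 ^ 2) - a 2 ^ 2), -(s * a 2) + v * (a 0 * a 1), s * a 1 + v * (a 0 * a 2);
       s * a 2 + v * (a 0 * a 1), 1 + v * (-(a 0 ^ 2) - a 2 ^ 2), -(s * a 0) + v * (a 1 * a 2);
       -(s * a 1) + v * (a 0 * a 2), s * a 0 + v * (a 1 * a 2), 1 + v * (-(a 0 ^ 2) - a 1 ^ 2)] := by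
  rw [pow_two]
  ext i j
  fin_cases i <;> fin_cases j <;>
    simp [skew, Matrix.mul_apply, Fin.sum_univ_three, Matrix.add_apply, Matrix.smul_apply,
      Matrix.one_apply, smul_eq_mul] <;> ring_nf <;> try exact Or.inl trivial

lemma trace_formula (a b : EuclideanSpace ℝ (Fin 3)) (sA vA sB vB : ℝ) :
    Matrix.trace
      (((1 : Matrix (Fin 3) (Fin 3) ℝ) + sB • skew b + vB • skew b ^ 2) *
        ((1 : Matrix (Fin 3) (Fin 3) ℝ) + sA • skew a + vA • skew a ^ 2)) =
      3 - 2 * vA * (a 0 ^ 2 + a 1 ^ 2 + a 2 ^ 2) - 2 * vB * (b 0 ^ 2 + b 1 ^ 2 + b 2 ^ 2)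
        - 2 * sA * sB * (a 0 * b 0 + a 1 * b 1 + a 2 * b 2)
        + vA * vB * ((a 0 * b 0 + a 1 * b 1 + a 2 * b 2) ^ 2
            + (a 0 ^ 2 + a 1 ^ 2 + a 2 ^ 2) * (b 0 ^ 2 + b 1 ^ 2 + b 2 ^ 2)) := by
  rw [rot_explicit, rot_explicit]
  simp [Matrix.trace_fin_three, Matrix.mul_apply, Fin.sum_univ_three]
  ring

lemma arccos_eq_two_arccos {x q : ℝ} (h0 : 0 ≤ q) (h1 : q ≤ 1) (hx : x = 2 * q ^ 2 - 1) :
    Real.arccos x = 2 * Real.arccos q := by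
  have hc : Real.cos (2 * Real.arccos q) = x := by
    rw [Real.cos_two_mul, Real.cos_arccos (by linarith) h1, hx]
  rw [← hc, Real.arccos_cos]
  · linarith [Real.arccos_nonneg q]
  · have h2 := Real.arccos_le_pi_div_two.mpr h0
    linarith

theorem angle_composed_rotation_eq
    (aA aB : EuclideanSpace ℝ (Fin 3)) (hA : ‖aA‖ = 1) (hB : ‖aB‖ = 1)
    (α β φ : ℝ) (hα : α ∈ Set.Icc 0 π) (hβ : β ∈ Set.Icc 0 π) (hφ : φ ∈ Set.Icc 0 π)
    (hcosφ : Real.cos φ = (inner ℝ aA aB : ℝ))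
    (hnonneg : 0 ≤ Real.cos (α / 2) * Real.cos (β / 2)
        - Real.sin (α / 2) * Real.sin (β / 2) * Real.cos φ) :
    Real.arccos
        ((Matrix.trace (NormedSpace.exp (skew (β • aB)) * NormedSpace.exp (skew (α • aA))) - 1) / 2)
      = 2 * Real.arccos (Real.cos (α / 2) * Real.cos (β / 2)
          - Real.sin (α / 2) * Real.sin (β / 2) * Real.cos φ) := by
  obtain ⟨hα0, hαπ⟩ := hα
  obtain ⟨hβ0, hβπ⟩ := hβ
  have hA'' : aA 0 ^ 2 + aA 1 ^ 2 + aA 2 ^ 2 = 1 := by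
    have h1 : (inner ℝ aA aA : ℝ) = 1 := by
      rw [real_inner_self_eq_norm_sq, hA, one_pow]
    simp only [PiLp.inner_apply, RCLike.inner_apply, conj_trivial, Fin.sum_univ_three] at h1
    linear_combination h1
  have hB'' : aB 0 ^ 2 + aB 1 ^ 2 + aB 2 ^ 2 = 1 := by
    have h1 : (inner ℝ aB aB : ℝ) = 1 := by
      rw [real_inner_self_eq_norm_sq, hB, one_pow]
    simp only [PiLp.inner_apply, RCLike.inner_apply, conj_trivial, Fin.sum_univ_three] at h1
    linear_combination h1
  have hd : aA 0 * aB 0 + aA 1 * aB 1 + aA 2 * aB 2 = Real.cos φ := by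
    rw [hcosφ]
    simp [PiLp.inner_apply, RCLike.inner_apply, Fin.sum_univ_three]
    ring
  rw [skew_smul, skew_smul, exp_skew aB hB'' β, exp_skew aA hA'' α,
    trace_formula aA aB (Real.sin α) (1 - Real.cos α) (Real.sin β) (1 - Real.cos β),
    hA'', hB'', hd]
  -- trig preliminaries
  have hsha : 0 ≤ Real.sin (α / 2) :=
    Real.sin_nonneg_of_nonneg_of_le_pi (by linarith) (by linarith [Real.pi_pos])
  have hshb : 0 ≤ Real.sin (β / 2) :=
    Real.sin_nonneg_of_nonneg_of_le_pi (by linarith) (by linarith [Real.pi_pos])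
  have hcφ : -1 ≤ Real.cos φ := Real.neg_one_le_cos φ
  have hq1 : Real.cos (α / 2) * Real.cos (β / 2)
      - Real.sin (α / 2) * Real.sin (β / 2) * Real.cos φ ≤ 1 := by
    have hsub := Real.cos_sub (α / 2) (β / 2)
    have hle := Real.cos_le_one (α / 2 - β / 2)
    nlinarith [mul_nonneg (mul_nonneg hsha hshb) (by linarith : (0:ℝ) ≤ 1 + Real.cos φ)]
  refine arccos_eq_two_arccos hnonneg hq1 ?_
  have hca : Real.cos α = 2 * Real.cos (α / 2) ^ 2 - 1 := by
    rw [← Real.cos_two_mul]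
    congr 1
    ring
  have hcb : Real.cos β = 2 * Real.cos (β / 2) ^ 2 - 1 := by
    rw [← Real.cos_two_mul]
    congr 1
    ring
  have hsa : Real.sin α = 2 * Real.sin (α / 2) * Real.cos (α / 2) := by
    rw [← Real.sin_two_mul]
    congr 1
    ring
  have hsb : Real.sin β = 2 * Real.sin (β / 2) * Real.cos (β / 2) := by
    rw [← Real.sin_two_mul]
    congr 1
    ring
  have hpa : Real.sin (α / 2) ^ 2 + Real.cos (α / 2) ^ 2 = 1 := Real.sin_sq_add_cos_sq _
  have hpb : Real.sin (β / 2) ^ 2 + Real.cos (β / 2) ^ 2 = 1 := Real.sin_sq_add_cos_sq _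
  rw [hca, hcb, hsa, hsb]
  linear_combination (2 * Real.cos φ ^ 2 * (Real.cos (α / 2) ^ 2 - 1)) * hpb
    - (2 * Real.cos φ ^ 2 * Real.sin (β / 2) ^ 2) * hpa
end

section
/- Let q_A and q_B be unit quaternions representing rotations by angles α, β ∈ [0, π] about unit axes a_A, a_B ∈ ℝ³ (so q_A has real part cos(α/2) and imaginary part sin(α/2)·a_A, and similarly for q_B), and let r_A = α·a_A, r_B = β·a_B ∈ ℝ³ with ‖r_A‖, ‖r_B‖ ≤ π. Then 2·arccos|Re(q_B · q_A)| ≤ ‖r_A + r_B‖, i.e. the angle of the rotation represented by the product quaternion q_B·q_A is at most the Euclidean distance from r_A to −r_B. -/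
open Real

private lemma mul_cos_le_sin' {y : ℝ} (h0 : 0 ≤ y) (h1 : y ≤ π) :
    y * Real.cos y ≤ Real.sin y := by
  have hs : 0 ≤ Real.sin y := Real.sin_nonneg_of_nonneg_of_le_pi h0 h1
  rcases le_or_gt (Real.cos y) 0 with hc | hc
  · exact le_trans (mul_nonpos_of_nonneg_of_nonpos h0 hc) hs
  · have hy2 : y < π / 2 := by
      by_contra h
      push_neg at h
      exact absurd (Real.cos_nonpos_of_pi_div_two_le_of_le h (by linarith [Real.pi_pos]))
        (not_le.mpr hc)
    rcases eq_or_lt_of_le h0 with h0' | h0'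
    · simp [← h0']
    · have := Real.lt_tan h0' hy2
      rw [Real.tan_eq_sin_div_cos] at this
      have := (lt_div_iff₀ hc).mp this
      linarith

private lemma convexOn_cos_sqrt' :
    ConvexOn ℝ (Set.Icc (0:ℝ) (π^2)) (fun x => Real.cos (Real.sqrt x)) := by
  have hig : interior (Set.Icc (0:ℝ) (π^2)) = Set.Ioo 0 (π^2) := interior_Icc
  set F' : ℝ → ℝ := fun x => -Real.sin (Real.sqrt x) * (1 / (2 * Real.sqrt x)) with hF'
  have hder : ∀ x : ℝ, 0 < x → HasDerivAt (fun x => Real.cos (Real.sqrt x)) (F' x) x := by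
    intro x hx
    have h1 := Real.hasDerivAt_sqrt hx.ne'
    simpa [hF', mul_comm] using h1.cos
  have hderiv_eq : ∀ x : ℝ, 0 < x → deriv (fun x => Real.cos (Real.sqrt x)) x = F' x :=
    fun x hx => (hder x hx).deriv
  have hder2 : ∀ x : ℝ, 0 < x →
      HasDerivAt F' ((Real.sin (Real.sqrt x) - Real.sqrt x * Real.cos (Real.sqrt x)) /
        (4 * (Real.sqrt x)^3)) x := by
    intro x hx
    have hy : 0 < Real.sqrt x := Real.sqrt_pos.mpr hx
    have hsq := Real.hasDerivAt_sqrt hx.ne'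
    have h1 : HasDerivAt (fun x => -Real.sin (Real.sqrt x))
        (-(Real.cos (Real.sqrt x) * (1 / (2 * Real.sqrt x)))) x := (hsq.sin).neg
    have h2' : HasDerivAt (fun x => 2 * Real.sqrt x) (2 * (1 / (2 * Real.sqrt x))) x :=
      hsq.const_mul 2
    have h2 : HasDerivAt (fun x => (2 * Real.sqrt x)⁻¹)
        (-(2 * (1 / (2 * Real.sqrt x))) / (2 * Real.sqrt x)^2) x := h2'.inv (by positivity)
    have h3 := h1.mul h2
    have heq : ((fun x => -Real.sin (Real.sqrt x)) * fun x => (2 * Real.sqrt x)⁻¹) = F' := by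
      funext t; simp [hF', div_eq_mul_inv]
    rw [heq] at h3
    refine h3.congr_deriv ?_
    field_simp
    ring
  apply convexOn_of_deriv2_nonneg (convex_Icc _ _)
  · exact (Real.continuous_cos.comp Real.continuous_sqrt).continuousOn
  · rw [hig]
    intro x hx
    exact ((hder x hx.1).differentiableAt).differentiableWithinAt
  · rw [hig]
    apply DifferentiableOn.congr (f := F')
    · intro x hx
      exact ((hder2 x hx.1).differentiableAt).differentiableWithinAt
    · intro x hx
      exact hderiv_eq x hx.1
  · rw [hig]
    intro x hx
    have hx0 := hx.1
    have hxπ := hx.2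
    have hy : 0 < Real.sqrt x := Real.sqrt_pos.mpr hx0
    have hyπ : Real.sqrt x ≤ π := by
      rw [show π = Real.sqrt (π^2) by rw [Real.sqrt_sq Real.pi_pos.le]]
      exact Real.sqrt_le_sqrt hxπ.le
    have heq : deriv (deriv (fun x => Real.cos (Real.sqrt x))) x = deriv F' x := by
      apply Filter.EventuallyEq.deriv_eq
      filter_upwards [Ioi_mem_nhds hx0] with t ht
      exact hderiv_eq t ht
    have h2 : deriv^[2] (fun x => Real.cos (Real.sqrt x)) x
        = deriv (deriv (fun x => Real.cos (Real.sqrt x))) x := by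
      simp [Function.iterate_succ, Function.iterate_one]
    rw [h2, heq, (hder2 x hx0).deriv]
    apply div_nonneg _ (by positivity)
    linarith [mul_cos_le_sin' hy.le hyπ]

private lemma arccos_le_arccos' {x y : ℝ} (h : x ≤ y) : Real.arccos y ≤ Real.arccos x := by
  unfold Real.arccos
  have := Real.monotone_arcsin h
  linarith

theorem quaternion_angle_composed_le_dist
    (aA aB : EuclideanSpace ℝ (Fin 3)) (hA : ‖aA‖ = 1) (hB : ‖aB‖ = 1)
    (α β : ℝ) (hα : α ∈ Set.Icc 0 π) (hβ : β ∈ Set.Icc 0 π)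
    (qA qB : Quaternion ℝ)
    (hqA : qA = ⟨Real.cos (α / 2), Real.sin (α / 2) * aA 0, Real.sin (α / 2) * aA 1,
                 Real.sin (α / 2) * aA 2⟩)
    (hqB : qB = ⟨Real.cos (β / 2), Real.sin (β / 2) * aB 0, Real.sin (β / 2) * aB 1,
                 Real.sin (β / 2) * aB 2⟩)
    (rA rB : EuclideanSpace ℝ (Fin 3)) (hrA : rA = α • aA) (hrB : rB = β • aB)
    (hrAn : ‖rA‖ ≤ π) (hrBn : ‖rB‖ ≤ π) :
    2 * Real.arccos |(qB * qA).re| ≤ ‖rA + rB‖ := by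
  obtain ⟨hα0, hα1⟩ := hα
  obtain ⟨hβ0, hβ1⟩ := hβ
  set d : ℝ := inner ℝ aA aB with hd
  have hdsum : d = aA 0 * aB 0 + aA 1 * aB 1 + aA 2 * aB 2 := by
    simp [hd, PiLp.inner_apply, Fin.sum_univ_three, RCLike.inner_apply, conj_trivial]
    ring
  have hdabs : |d| ≤ 1 := by
    have := abs_real_inner_le_norm aA aB
    rw [hA, hB] at this
    simpa using this
  have hd1 := (abs_le.mp hdabs).1
  have hd2 := (abs_le.mp hdabs).2
  have hre : (qB * qA).re
      = Real.cos (α/2) * Real.cos (β/2) - Real.sin (α/2) * Real.sin (β/2) * d := by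
    rw [Quaternion.re_mul, hqA, hqB]
    show Real.cos (β/2) * Real.cos (α/2) - _ - _ - _ = _
    rw [hdsum]; ring
  have hnA : ‖rA‖ = α := by
    rw [hrA, norm_smul, hA, Real.norm_eq_abs, abs_of_nonneg hα0, mul_one]
  have hnB : ‖rB‖ = β := by
    rw [hrB, norm_smul, hB, Real.norm_eq_abs, abs_of_nonneg hβ0, mul_one]
  set s : ℝ := ‖rA + rB‖ with hs
  have hs0 : 0 ≤ s := norm_nonneg _
  have hs2π : s ≤ 2 * π := by
    calc s ≤ ‖rA‖ + ‖rB‖ := norm_add_le _ _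
    _ ≤ 2 * π := by rw [hnA, hnB]; linarith
  have hssq : s ^ 2 = α^2 + β^2 + 2*α*β*d := by
    rw [hs, @norm_add_sq_real, hnA, hnB, hrA, hrB, real_inner_smul_left, real_inner_smul_right,
      ← hd]
    ring
  -- the key inequality  cos (s/2) ≤ (qB * qA).re
  set a : ℝ := α / 2 with ha
  set b : ℝ := β / 2 with hb
  have hπ := Real.pi_pos
  have hxmem : (a - b)^2 ∈ Set.Icc (0:ℝ) (π^2) := ⟨sq_nonneg _, by nlinarith⟩
  have hymem : (a + b)^2 ∈ Set.Icc (0:ℝ) (π^2) := ⟨sq_nonneg _, by nlinarith⟩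
  have hcomb := convexOn_cos_sqrt'.2 hxmem hymem
    (by linarith : (0:ℝ) ≤ (1 - d)/2) (by linarith : (0:ℝ) ≤ (1 + d)/2) (by ring)
  simp only [smul_eq_mul] at hcomb
  have hval : (1 - d)/2 * (a - b)^2 + (1 + d)/2 * (a + b)^2 = (s/2)^2 := by
    have : (s/2)^2 = s^2/4 := by ring
    rw [this, hssq, ha, hb]; ring
  rw [hval, Real.sqrt_sq (by linarith : (0:ℝ) ≤ s/2), Real.sqrt_sq_eq_abs,
    Real.sqrt_sq (by linarith : (0:ℝ) ≤ a + b), Real.cos_abs] at hcomb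
  have hkey : Real.cos (s/2) ≤ (qB * qA).re := by
    rw [hre]
    calc Real.cos (s/2)
        ≤ (1 - d)/2 * Real.cos (a - b) + (1 + d)/2 * Real.cos (a + b) := hcomb
      _ = Real.cos a * Real.cos b - Real.sin a * Real.sin b * d := by
          rw [Real.cos_sub, Real.cos_add]; ring
      _ = _ := by rw [ha, hb]
  have h1 : Real.arccos |(qB * qA).re| ≤ s/2 := by
    have h2 : Real.arccos |(qB * qA).re| ≤ Real.arccos (Real.cos (s/2)) :=
      arccos_le_arccos' (hkey.trans (le_abs_self _))
    rwa [Real.arccos_cos (by linarith) (by linarith)] at h2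
  linarith
end
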